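/- arXiv:1609.08177 — 3 statements merged into one kernel-verified Lean document; each statement's English description precedes it below -/
import Mathlib

section
/- Let f : ℝ^n → ℝ be differentiable with L-Lipschitz gradient, g : ℝ^n → ℝ convex, and F = f + g. Fix x, y ∈ ℝ^n, t > 0, and let p = prox_{tg}(x - t∇f(y)). Then for any z ∈ ℝ^n: F(z) - F(p) ≥ (1/(2t))(‖x - p‖² + ‖z - p‖² - ‖x - z‖²) + ⟨y - z, ∇f(y)⟩ + f(z) - f(y) - (L/2)‖p - y‖². -/
open scoped RealInnerProductSpace

open Filter Topology

lemma descent_aux {n : ℕ} {L : ℝ} (hL : 0 ≤ L)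
    (f : EuclideanSpace ℝ (Fin n) → ℝ) (f' : EuclideanSpace ℝ (Fin n) → EuclideanSpace ℝ (Fin n))
    (hf : ∀ x, HasGradientAt f (f' x) x)
    (hlip : ∀ x y, ‖f' x - f' y‖ ≤ L * ‖x - y‖) (a b : EuclideanSpace ℝ (Fin n)) :
    f b ≤ f a + ⟪f' a, b - a⟫ + L / 2 * ‖b - a‖ ^ 2 := by
  set v : EuclideanSpace ℝ (Fin n) := b - a with hv
  have hline : ∀ s : ℝ, HasDerivAt (fun s : ℝ => f (a + s • v)) ⟪f' (a + s • v), v⟫ s := by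
    intro s
    have hγ : HasDerivAt (fun s : ℝ => a + s • v) v s := by
      simpa using ((hasDerivAt_id s).smul_const v).const_add a
    have := (hf (a + s • v)).hasFDerivAt.comp_hasDerivAt s hγ
    simp at this
    exact this
  set h : ℝ → ℝ := fun s => f (a + s • v) - s * ⟪f' a, v⟫ - L * s ^ 2 / 2 * ‖v‖ ^ 2 with hh
  have hderiv : ∀ s : ℝ, HasDerivAt h (⟪f' (a + s • v), v⟫ - ⟪f' a, v⟫ - L * s * ‖v‖ ^ 2) s := by
    intro s
    have h1 := (hline s).sub ((hasDerivAt_id s).mul_const ⟪f' a, v⟫)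
    have h2 : HasDerivAt (fun s : ℝ => L * s ^ 2 / 2 * ‖v‖ ^ 2) (L * s * ‖v‖ ^ 2) s := by
      have h3 := (((hasDerivAt_pow 2 s).const_mul L).div_const 2).mul_const (‖v‖ ^ 2)
      exact h3.congr_deriv (by rw [show (2:ℕ) - 1 = 1 from rfl]; push_cast; ring)
    exact (h1.sub h2).congr_deriv (by ring)
  have hdiff : Differentiable ℝ h := fun s => (hderiv s).differentiableAt
  have hmono : AntitoneOn h (Set.Icc 0 1) := by
    apply antitoneOn_of_deriv_nonpos (convex_Icc 0 1) hdiff.continuous.continuousOn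
      (hdiff.differentiableOn)
    intro s hs
    rw [interior_Icc] at hs
    rw [(hderiv s).deriv]
    have hcs : ⟪f' (a + s • v) - f' a, v⟫ ≤ ‖f' (a + s • v) - f' a‖ * ‖v‖ :=
      real_inner_le_norm _ _
    have hl : ‖f' (a + s • v) - f' a‖ ≤ L * ‖s • v‖ := by
      have := hlip (a + s • v) a
      simpa using this
    have hsv : ‖s • v‖ = s * ‖v‖ := by
      rw [norm_smul, Real.norm_eq_abs, abs_of_pos hs.1]
    have h5 : ⟪f' (a + s • v) - f' a, v⟫ ≤ L * s * ‖v‖ ^ 2 := by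
      calc ⟪f' (a + s • v) - f' a, v⟫ ≤ ‖f' (a + s • v) - f' a‖ * ‖v‖ := hcs
        _ ≤ L * ‖s • v‖ * ‖v‖ := by
            apply mul_le_mul_of_nonneg_right hl (norm_nonneg _)
        _ = L * s * ‖v‖ ^ 2 := by rw [hsv]; ring
    rw [inner_sub_left] at h5
    linarith
  have h01 := hmono (Set.mem_Icc.2 ⟨le_refl 0, zero_le_one⟩)
    (Set.mem_Icc.2 ⟨zero_le_one, le_refl 1⟩) zero_le_one
  have e0 : h 0 = f a := by simp [hh]
  have e1 : h 1 = f b - ⟪f' a, v⟫ - L / 2 * ‖v‖ ^ 2 := by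
    simp [hh, hv]
  rw [e0, e1] at h01
  linarith

lemma prox_ineq {n : ℕ} (g : EuclideanSpace ℝ (Fin n) → ℝ) (hg : ConvexOn ℝ Set.univ g)
    (u p : EuclideanSpace ℝ (Fin n)) (t : ℝ) (ht : 0 < t)
    (hp : ∀ w, g p + ‖p - u‖ ^ 2 / (2 * t) ≤ g w + ‖w - u‖ ^ 2 / (2 * t))
    (z : EuclideanSpace ℝ (Fin n)) :
    ⟪u - p, z - p⟫ ≤ t * (g z - g p) := by
  set A : ℝ := ⟪p - u, z - p⟫ with hA
  set B : ℝ := ‖z - p‖ ^ 2 with hB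
  have key : ∀ s : ℝ, s ∈ Set.Ioc (0:ℝ) 1 →
      -(2 * A + s * B) / (2 * t) ≤ g z - g p := by
    intro s hs
    have h1 := hp (p + s • (z - p))
    have hconv : g (p + s • (z - p)) ≤ (1 - s) * g p + s * g z := by
      have hc := hg.2 (Set.mem_univ p) (Set.mem_univ z)
        (by linarith [hs.2] : (0:ℝ) ≤ 1 - s) (le_of_lt hs.1) (by ring)
      have he : (1 - s) • p + s • z = p + s • (z - p) := by module
      rwa [he] at hc
    have hnorm : ‖p + s • (z - p) - u‖ ^ 2 = ‖p - u‖ ^ 2 + 2 * (s * A) + s ^ 2 * B := by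
      have he : p + s • (z - p) - u = (p - u) + s • (z - p) := by abel
      rw [he, norm_add_sq_real, real_inner_smul_right, norm_smul, Real.norm_eq_abs,
        mul_pow, sq_abs, hA, hB]
    rw [hnorm] at h1
    have hsplit : (‖p - u‖ ^ 2 + 2 * (s * A) + s ^ 2 * B) / (2 * t)
        = ‖p - u‖ ^ 2 / (2 * t) + (2 * (s * A) + s ^ 2 * B) / (2 * t) := by ring
    rw [hsplit] at h1
    have h3 : s * (g p - g z) ≤ (2 * (s * A) + s ^ 2 * B) / (2 * t) := by linarith
    have h4 : s * (g p - g z) * (2 * t) ≤ 2 * (s * A) + s ^ 2 * B :=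
      (le_div_iff₀ (by positivity)).mp h3
    have h5 : s * ((g p - g z) * (2 * t)) ≤ s * (2 * A + s * B) := by nlinarith
    have h6 : (g p - g z) * (2 * t) ≤ 2 * A + s * B :=
      le_of_mul_le_mul_left h5 hs.1
    rw [div_le_iff₀ (by positivity)]
    linarith
  have hlim : Tendsto (fun s : ℝ => -(2 * A + s * B) / (2 * t)) (𝓝[>] (0:ℝ))
      (𝓝 (-(2 * A + 0 * B) / (2 * t))) := by
    apply Tendsto.mono_left _ nhdsWithin_le_nhds
    exact (Continuous.tendsto (by continuity) 0)
  have hmem : Set.Ioc (0:ℝ) 1 ∈ 𝓝[>] (0:ℝ) := Ioc_mem_nhdsGT (by norm_num)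
  have hle : -(2 * A + 0 * B) / (2 * t) ≤ g z - g p :=
    le_of_tendsto hlim (Filter.eventually_of_mem hmem key)
  have hAe : A = -⟪u - p, z - p⟫ := by
    rw [hA, ← inner_neg_left]; congr 1; abel
  rw [hAe] at hle
  have : ⟪u - p, z - p⟫ / t ≤ g z - g p := by
    have he : -(2 * -⟪u - p, z - p⟫ + 0 * B) / (2 * t) = ⟪u - p, z - p⟫ / t := by
      field_simp; ring
    rwa [he] at hle
  calc ⟪u - p, z - p⟫ = (⟪u - p, z - p⟫ / t) * t := by field_simp
    _ ≤ (g z - g p) * t := mul_le_mul_of_nonneg_right this ht.le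
    _ = t * (g z - g p) := by ring

theorem key_lemma_ii (n : ℕ) (L : ℝ) (hL : 0 < L)
    (f : EuclideanSpace ℝ (Fin n) → ℝ) (f' : EuclideanSpace ℝ (Fin n) → EuclideanSpace ℝ (Fin n))
    (hf : ∀ x, HasGradientAt f (f' x) x)
    (hlip : ∀ x y, ‖f' x - f' y‖ ≤ L * ‖x - y‖)
    (g : EuclideanSpace ℝ (Fin n) → ℝ) (hg : ConvexOn ℝ Set.univ g)
    (x y : EuclideanSpace ℝ (Fin n)) (t : ℝ) (ht : 0 < t)
    (p : EuclideanSpace ℝ (Fin n))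
    (hp : ∀ w, g p + ‖p - (x - t • f' y)‖ ^ 2 / (2 * t) ≤ g w + ‖w - (x - t • f' y)‖ ^ 2 / (2 * t))
    (z : EuclideanSpace ℝ (Fin n)) :
    (f z + g z) - (f p + g p) ≥ (1 / (2 * t)) * (‖x - p‖ ^ 2 + ‖z - p‖ ^ 2 - ‖x - z‖ ^ 2)
      + ⟪y - z, f' y⟫ + f z - f y - (L / 2) * ‖p - y‖ ^ 2 := by
  have hdesc := descent_aux hL.le f f' hf hlip y p
  have hprox := prox_ineq g hg (x - t • f' y) p t ht hp z
  -- expand the inner product in hprox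
  have hexp : ⟪x - t • f' y - p, z - p⟫ = ⟪x - p, z - p⟫ - t * ⟪f' y, z - p⟫ := by
    have he : x - t • f' y - p = (x - p) - t • f' y := by abel
    rw [he, inner_sub_left, real_inner_smul_left]
  rw [hexp] at hprox
  -- polarization identity
  have hpol : ‖x - z‖ ^ 2 = ‖x - p‖ ^ 2 - 2 * ⟪x - p, z - p⟫ + ‖z - p‖ ^ 2 := by
    have he : x - z = (x - p) - (z - p) := by abel
    rw [he, norm_sub_sq_real]
  -- inner product identity
  have hid : ⟪y - z, f' y⟫ + ⟪f' y, z - p⟫ + ⟪f' y, p - y⟫ = 0 := by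
    rw [inner_sub_left, inner_sub_right, inner_sub_right,
      real_inner_comm y (f' y), real_inner_comm z (f' y)]
    ring
  -- from hprox : ⟪x - p, z - p⟫ ≤ t * (g z - g p) + t * ⟪f' y, z - p⟫
  have h1 : ⟪x - p, z - p⟫ / t ≤ g z - g p + ⟪f' y, z - p⟫ := by
    rw [div_le_iff₀ ht]
    nlinarith
  have h2 : (1 / (2 * t)) * (‖x - p‖ ^ 2 + ‖z - p‖ ^ 2 - ‖x - z‖ ^ 2)
      = ⟪x - p, z - p⟫ / t := by
    rw [hpol]; field_simp; ring
  rw [ge_iff_le, h2]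
  linarith
end

section
/- Let f be convex, differentiable with L-Lipschitz gradient, g : ℝ^n → ℝ convex, F = f + g, and let step sizes (sₖ, αₖ) satisfy 0 < s₋ ≤ sₖ ≤ 1/(2L), sₖ ≤ αₖ ≤ 1/L - sₖ, and αₖ ≥ α₋ > 0 for all k. Let (xₖ) be generated by the extragradient method: yₖ = prox_{sₖg}(xₖ - sₖ∇f(xₖ)), x_{k+1} = prox_{αₖg}(xₖ - αₖ∇f(yₖ)). Then for any minimizer x* of F and all m ≥ 1, F(x_m) - F(x*) ≤ ‖x₀ - x*‖²/(2 m α₋). -/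
open scoped RealInnerProductSpace

lemma eeg_line_deriv {n : ℕ} (f : EuclideanSpace ℝ (Fin n) → ℝ)
    (f' : EuclideanSpace ℝ (Fin n) → EuclideanSpace ℝ (Fin n))
    (hf : ∀ x, HasGradientAt f (f' x) x) (a d : EuclideanSpace ℝ (Fin n)) (t : ℝ) :
    HasDerivAt (fun t : ℝ => f (a + t • d)) ⟪f' (a + t • d), d⟫ t := by
  have hline : HasDerivAt (fun t : ℝ => a + t • d) d t := by
    simpa using ((hasDerivAt_id t).smul_const d).const_add a
  have h1 := (hasGradientAt_iff_hasFDerivAt.mp (hf (a + t • d))).comp_hasDerivAt t hline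
  simpa [InnerProductSpace.toDual_apply_apply, Function.comp_def] using h1

lemma eeg_conv_grad {n : ℕ} (f : EuclideanSpace ℝ (Fin n) → ℝ)
    (f' : EuclideanSpace ℝ (Fin n) → EuclideanSpace ℝ (Fin n))
    (hfconv : ConvexOn ℝ Set.univ f) (hf : ∀ x, HasGradientAt f (f' x) x)
    (a b : EuclideanSpace ℝ (Fin n)) :
    f a + ⟪f' a, b - a⟫ ≤ f b := by
  have hconv : ConvexOn ℝ Set.univ (fun t : ℝ => f (a + t • (b - a))) := by
    have h := hfconv.comp_affineMap (AffineMap.lineMap a b)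
    simp only [Set.preimage_univ] at h
    have he : (fun t : ℝ => f (a + t • (b - a))) = f ∘ AffineMap.lineMap a b := by
      funext t
      simp [Function.comp, AffineMap.lineMap_apply]
      abel_nf
    rw [he]; exact h
  have hd0 : HasDerivAt (fun t : ℝ => f (a + t • (b - a))) ⟪f' a, b - a⟫ 0 := by
    have := eeg_line_deriv f f' hf a (b - a) 0
    simpa using this
  have hslope := hconv.le_slope_of_hasDerivAt (Set.mem_univ (0:ℝ)) (Set.mem_univ (1:ℝ))
    one_pos hd0
  rw [slope_def_field] at hslope
  simp only [one_smul, zero_smul, add_zero, div_one, sub_zero, add_sub_cancel] at hslope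
  linarith

lemma eeg_descent {n : ℕ} (L : ℝ) (f : EuclideanSpace ℝ (Fin n) → ℝ)
    (f' : EuclideanSpace ℝ (Fin n) → EuclideanSpace ℝ (Fin n))
    (hf : ∀ x, HasGradientAt f (f' x) x)
    (hlip : ∀ x y, ‖f' x - f' y‖ ≤ L * ‖x - y‖)
    (a b : EuclideanSpace ℝ (Fin n)) :
    f b ≤ f a + ⟪f' a, b - a⟫ + L / 2 * ‖b - a‖ ^ 2 := by
  set d := b - a with hd
  set ψ : ℝ → ℝ := fun t => L/2*t^2*‖d‖^2 + t*⟪f' a, d⟫ - f (a + t • d) with hψ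
  have hderiv : ∀ t : ℝ, HasDerivAt ψ (L*t*‖d‖^2 + ⟪f' a, d⟫ - ⟪f' (a + t • d), d⟫) t := by
    intro t
    have h1 : HasDerivAt (fun t : ℝ => L/2*t^2*‖d‖^2) (L*t*‖d‖^2) t := by
      have := ((hasDerivAt_pow 2 t).const_mul (L/2)).mul_const (‖d‖^2)
      exact this.congr_deriv (by ring)
    have h2 : HasDerivAt (fun t : ℝ => t*⟪f' a, d⟫) ⟪f' a, d⟫ t := by
      simpa using (hasDerivAt_id t).mul_const ⟪f' a, d⟫
    exact (h1.add h2).sub (eeg_line_deriv f f' hf a d t)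
  have hmono : MonotoneOn ψ (Set.Icc 0 1) := by
    apply monotoneOn_of_deriv_nonneg (convex_Icc 0 1)
    · exact fun t _ => ((hderiv t).differentiableAt).continuousAt.continuousWithinAt
    · exact fun t _ => ((hderiv t).differentiableAt).differentiableWithinAt
    · intro t ht
      rw [interior_Icc] at ht
      rw [(hderiv t).deriv]
      have hinner : ⟪f' (a + t • d) - f' a, d⟫ ≤ ‖f' a - f' (a + t • d)‖ * ‖d‖ := by
        have h := real_inner_le_norm (f' (a + t • d) - f' a) d
        rwa [norm_sub_rev] at h
      have hlipn : ‖f' a - f' (a + t • d)‖ ≤ L * (t * ‖d‖) := by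
        have := hlip a (a + t • d)
        have he : a - (a + t • d) = (-t) • d := by module
        rw [he, norm_smul] at this
        simpa [abs_of_pos ht.1] using this
      have hbd : ‖f' a - f' (a + t • d)‖ * ‖d‖ ≤ L * t * ‖d‖^2 := by
        nlinarith [norm_nonneg d, norm_nonneg (f' a - f' (a + t • d))]
      have hsub : ⟪f' (a + t • d), d⟫ - ⟪f' a, d⟫ = ⟪f' (a + t • d) - f' a, d⟫ := by
        rw [inner_sub_left]
      linarith
  have h01 := hmono (Set.mem_Icc.mpr ⟨le_refl 0, zero_le_one⟩)
    (Set.mem_Icc.mpr ⟨zero_le_one, le_refl 1⟩) zero_le_one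
  simp only [hψ] at h01
  simp only [zero_smul, add_zero, one_smul, zero_pow, one_pow] at h01
  have hab : a + d = b := by rw [hd]; abel
  rw [hab] at h01
  nlinarith [h01]

lemma eeg_prox_subgrad {n : ℕ} (g : EuclideanSpace ℝ (Fin n) → ℝ)
    (hg : ConvexOn ℝ Set.univ g) (t : ℝ) (ht : 0 < t)
    (v p : EuclideanSpace ℝ (Fin n))
    (hp : ∀ w, g p + ‖p - v‖ ^ 2 / (2 * t) ≤ g w + ‖w - v‖ ^ 2 / (2 * t))
    (w : EuclideanSpace ℝ (Fin n)) :
    ⟪v - p, w - p⟫ ≤ t * (g w - g p) := by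
  apply le_of_forall_pos_le_add
  intro ε hε
  set c : ℝ := min 1 (2 * ε / (‖w - p‖ ^ 2 + 1)) with hc
  have hq : 0 < ‖w - p‖ ^ 2 + 1 := by positivity
  have hc0 : 0 < c := lt_min one_pos (by positivity)
  have hc1 : c ≤ 1 := min_le_left _ _
  -- convexity
  have hcv : g (p + c • (w - p)) ≤ (1 - c) * g p + c * g w := by
    have h := hg.2 (Set.mem_univ p) (Set.mem_univ w) (by linarith : (0:ℝ) ≤ 1 - c)
      hc0.le (by ring)
    have he : (1 - c) • p + c • w = p + c • (w - p) := by module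
    rwa [he] at h
  -- norm expansion
  have hexp : ‖p + c • (w - p) - v‖ ^ 2
      = ‖p - v‖ ^ 2 + 2 * c * ⟪p - v, w - p⟫ + c ^ 2 * ‖w - p‖ ^ 2 := by
    have he : p + c • (w - p) - v = (p - v) + c • (w - p) := by module
    rw [he, norm_add_sq_real, real_inner_smul_right, norm_smul]
    simp [abs_of_pos hc0]
    ring
  have hkey := hp (p + c • (w - p))
  rw [hexp] at hkey
  -- derive
  have h2t : 0 < 2 * t := by linarith
  have hmain : ⟪v - p, w - p⟫ ≤ t * (g w - g p) + c / 2 * ‖w - p‖ ^ 2 := by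
    have hvp : ⟪v - p, w - p⟫ = -⟪p - v, w - p⟫ := by
      rw [← inner_neg_left]; congr 1; module
    rw [hvp]
    have hdiv : (‖p - v‖ ^ 2 + 2 * c * ⟪p - v, w - p⟫ + c ^ 2 * ‖w - p‖ ^ 2) / (2 * t)
        = ‖p - v‖ ^ 2 / (2 * t) + (2 * c * ⟪p - v, w - p⟫ + c ^ 2 * ‖w - p‖ ^ 2) / (2 * t) := by
      ring
    rw [hdiv] at hkey
    set I : ℝ := ⟪p - v, w - p⟫ with hI
    set W : ℝ := ‖w - p‖ ^ 2 with hW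
    have h1 : 0 ≤ c * (g w - g p) + (2 * c * I + c ^ 2 * W) / (2 * t) := by
      linarith
    have hdm : (2 * c * I + c ^ 2 * W) / (2 * t) * (2 * t) = 2 * c * I + c ^ 2 * W :=
      div_mul_cancel₀ _ (ne_of_gt h2t)
    have h2 : 0 ≤ (c * (g w - g p) + (2 * c * I + c ^ 2 * W) / (2 * t)) * (2 * t) :=
      mul_nonneg h1 h2t.le
    rw [add_mul, hdm] at h2
    nlinarith [h2, hc0, ht]
  have hlast : c / 2 * ‖w - p‖ ^ 2 ≤ ε := by
    have h1 : c ≤ 2 * ε / (‖w - p‖ ^ 2 + 1) := min_le_right _ _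
    have h1' : c * (‖w - p‖ ^ 2 + 1) ≤ 2 * ε := (le_div_iff₀ hq).mp h1
    nlinarith [h1', hc0.le, sq_nonneg ‖w - p‖]
  linarith

lemma eeg_poly_uv (u v : ℝ) (hu : 0 < u) (huv : u ≤ v) (hsum : u + v ≤ 1) :
    u^2*(1+v)^2 ≤ v^2*(1-v) + 2*u*v := by
  have hv0 : 0 < v := lt_of_lt_of_le hu huv
  rcases le_or_gt v (1/2) with hv | hv
  · have h2 : 0 ≤ u*v^2*(2-3*v-v^2) := by
      have : (0:ℝ) ≤ 2-3*v-v^2 := by nlinarith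
      positivity
    have h1 : 0 ≤ (v-u)*(v^2*(1-v)) :=
      mul_nonneg (by linarith) (mul_nonneg (sq_nonneg v) (by linarith))
    have h3 : 0 ≤ (1+v)^2*(v*(u*(v-u))) :=
      mul_nonneg (sq_nonneg _) (mul_nonneg hv0.le (mul_nonneg hu.le (by linarith)))
    have hid : v * (v^2*(1-v) + 2*u*v - u^2*(1+v)^2)
        = (v-u)*(v^2*(1-v)) + u*v^2*(2-3*v-v^2) + (1+v)^2*(v*(u*(v-u))) := by ring
    have hQ : 0 ≤ v * (v^2*(1-v) + 2*u*v - u^2*(1+v)^2) := by rw [hid]; linarith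
    have := (mul_nonneg_iff_of_pos_left hv0).mp hQ
    linarith
  · have hwu : u ≤ 1 - v := by linarith
    have hw0 : 0 < 1 - v := lt_of_lt_of_le hu hwu
    have hw2 : 1 - v ≤ 1/2 := by linarith
    have hcube : 0 ≤ 3 - 8*(1-v) + 5*(1-v)^2 - (1-v)^3 := by nlinarith
    have h1 : 0 ≤ ((1-v)-u)*(v^2*(1-v)) :=
      mul_nonneg (by linarith) (mul_nonneg (sq_nonneg v) hw0.le)
    have h2 : 0 ≤ u*(1-v)*(3 - 8*(1-v) + 5*(1-v)^2 - (1-v)^3) :=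
      mul_nonneg (mul_nonneg hu.le hw0.le) hcube
    have h3 : 0 ≤ (1+v)^2*((1-v)*(u*((1-v)-u))) :=
      mul_nonneg (sq_nonneg _) (mul_nonneg hw0.le (mul_nonneg hu.le (by linarith)))
    have hid : (1-v) * (v^2*(1-v) + 2*u*v - u^2*(1+v)^2)
        = ((1-v)-u)*(v^2*(1-v)) + u*(1-v)*(3 - 8*(1-v) + 5*(1-v)^2 - (1-v)^3)
          + (1+v)^2*((1-v)*(u*((1-v)-u))) := by ring
    have hQ : 0 ≤ (1-v) * (v^2*(1-v) + 2*u*v - u^2*(1+v)^2) := by rw [hid]; linarith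
    have := (mul_nonneg_iff_of_pos_left hw0).mp hQ
    linarith

lemma eeg_poly (L sk ak : ℝ) (hL : 0 < L) (hs : 0 < sk) (h2 : sk ≤ ak)
    (h3 : L*(ak+sk) ≤ 1) : sk^2*(1+ak*L)^2 ≤ ak^2*(1-ak*L) + 2*sk*ak := by
  have key := eeg_poly_uv (sk*L) (ak*L) (mul_pos hs hL)
    (by nlinarith) (by nlinarith)
  have hL2 : 0 < L^2 := by positivity
  have hQ : 0 ≤ L^2 * (ak^2*(1-ak*L) + 2*sk*ak - sk^2*(1+ak*L)^2) := by nlinarith [key]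
  have := (mul_nonneg_iff_of_pos_left hL2).mp hQ
  linarith

lemma eeg_scalar (L sk ak A Bn I J : ℝ) (hL : 0 < L) (hsk : 0 < sk)
    (hska : sk ≤ ak) (hsum : L*(ak+sk) ≤ 1) (hA : 0 ≤ A) (hBn : 0 ≤ Bn)
    (hI : I ≤ A*Bn) (hJ : J ≤ L*A*Bn) (hB : (ak-sk)*I + sk*Bn^2 ≤ sk*ak*J) :
    0 ≤ A^2 - 2*I + Bn^2 - ak*L*Bn^2 := by
  have hak : 0 < ak := lt_of_lt_of_le hsk hska
  have poly := eeg_poly L sk ak hL hsk hska hsum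
  have hI2 : ak * I ≤ sk*I - sk*Bn^2 + sk*ak*J := by linarith [hB]
  have hJ' : sk*ak*J ≤ sk*ak*(L*A*Bn) :=
    mul_le_mul_of_nonneg_left hJ (mul_nonneg hsk.le hak.le)
  have hI3 : sk*I ≤ sk*(A*Bn) := mul_le_mul_of_nonneg_left hI hsk.le
  have hI4 : ak * I ≤ sk*(A*Bn) - sk*Bn^2 + sk*ak*(L*A*Bn) := by linarith
  have hT : 0 ≤ ak*A^2 + (ak - ak^2*L + 2*sk)*Bn^2 - 2*sk*(1+ak*L)*(A*Bn) := by
    nlinarith [poly, sq_nonneg (ak*A - sk*(1+ak*L)*Bn), sq_nonneg Bn, hak]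
  have hE : 0 ≤ ak*(A^2 - 2*I + Bn^2 - ak*L*Bn^2) := by nlinarith [hT, hI4]
  exact (mul_nonneg_iff_of_pos_left hak).mp hE

set_option maxHeartbeats 1000000 in
lemma eeg_onestep {n : ℕ} (L : ℝ) (hL : 0 < L)
    (f : EuclideanSpace ℝ (Fin n) → ℝ) (f' : EuclideanSpace ℝ (Fin n) → EuclideanSpace ℝ (Fin n))
    (hfconv : ConvexOn ℝ Set.univ f)
    (hf : ∀ x, HasGradientAt f (f' x) x)
    (hlip : ∀ x y, ‖f' x - f' y‖ ≤ L * ‖x - y‖)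
    (g : EuclideanSpace ℝ (Fin n) → ℝ) (hg : ConvexOn ℝ Set.univ g)
    (sk ak : ℝ) (hsk : 0 < sk) (hska : sk ≤ ak) (hsum : L * (ak + sk) ≤ 1)
    (xk yk xp : EuclideanSpace ℝ (Fin n))
    (hyk : ∀ w, g yk + ‖yk - (xk - sk • f' xk)‖ ^ 2 / (2 * sk)
        ≤ g w + ‖w - (xk - sk • f' xk)‖ ^ 2 / (2 * sk))
    (hxp : ∀ w, g xp + ‖xp - (xk - ak • f' yk)‖ ^ 2 / (2 * ak)
        ≤ g w + ‖w - (xk - ak • f' yk)‖ ^ 2 / (2 * ak))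
    (z : EuclideanSpace ℝ (Fin n)) :
    (‖xp - z‖ ^ 2 - ‖xk - z‖ ^ 2) / 2 ≤ ak * ((f z + g z) - (f xp + g xp)) := by
  have hak : 0 < ak := lt_of_lt_of_le hsk hska
  have h1 := eeg_prox_subgrad g hg ak hak (xk - ak • f' yk) xp hxp
  have h2 := eeg_prox_subgrad g hg sk hsk (xk - sk • f' xk) yk hyk
  -- scalar abbreviations
  set A := ‖xk - yk‖ with hA
  set Bn := ‖xp - yk‖ with hBn
  set I : ℝ := ⟪xk - yk, xp - yk⟫ with hI
  set J : ℝ := ⟪f' xk - f' yk, xp - yk⟫ with hJdef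
  -- h1 at yk
  have h1yk : -I + Bn^2 + ak * ⟪f' yk, xp - yk⟫ ≤ ak * (g yk - g xp) := by
    have h := h1 yk
    have e1 : (xk - ak • f' yk) - xp = ((xk - yk) - (xp - yk)) - ak • f' yk := by module
    have e2 : yk - xp = -(xp - yk) := by module
    rw [e1, e2, inner_neg_right, inner_sub_left, inner_sub_left, real_inner_smul_left] at h
    rw [hI, hBn]
    rw [← real_inner_self_eq_norm_sq]
    linarith [h]
  -- h2 at xp
  have h2xp : I - sk * ⟪f' xk, xp - yk⟫ ≤ sk * (g xp - g yk) := by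
    have h := h2 xp
    have e1 : (xk - sk • f' xk) - yk = (xk - yk) - sk • f' xk := by module
    rw [e1, inner_sub_left, real_inner_smul_left] at h
    linarith [h]
  -- the B inequality
  have hB : (ak - sk)*I + sk*Bn^2 ≤ sk*ak*J := by
    have hmul1 := mul_le_mul_of_nonneg_left h1yk hsk.le
    have hmul2 := mul_le_mul_of_nonneg_left h2xp hak.le
    rw [hJdef, inner_sub_left]
    nlinarith [hmul1, hmul2]
  have hIle : I ≤ A * Bn := real_inner_le_norm _ _
  have hJle : J ≤ L * A * Bn := by
    have h := real_inner_le_norm (f' xk - f' yk) (xp - yk)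
    have h2 := mul_le_mul_of_nonneg_right (hlip xk yk) (norm_nonneg (xp - yk))
    calc J ≤ ‖f' xk - f' yk‖ * Bn := h
    _ ≤ L * A * Bn := by rw [hA, hBn] at *; nlinarith [h2]
  have hE := eeg_scalar L sk ak A Bn I J hL hsk hska hsum (norm_nonneg _) (norm_nonneg _)
    hIle hJle hB
  -- norm of xk - xp
  have hnxp : ‖xk - xp‖^2 = A^2 - 2*I + Bn^2 := by
    have e : xk - xp = (xk - yk) - (xp - yk) := by module
    rw [e, norm_sub_sq_real, hA, hBn, hI]
  -- main chain with z
  have hg1 : ⟪xk - xp, z - xp⟫ - ak * ⟪f' yk, z - xp⟫ ≤ ak * (g z - g xp) := by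
    have h := h1 z
    have e1 : (xk - ak • f' yk) - xp = (xk - xp) - ak • f' yk := by module
    rw [e1, inner_sub_left, real_inner_smul_left] at h
    linarith [h]
  have hf1 := eeg_conv_grad f f' hfconv hf yk z
  have hf2 := eeg_descent L f f' hf hlip yk xp
  have hfdiff : ⟪f' yk, z - yk⟫ - ⟪f' yk, xp - yk⟫ = ⟪f' yk, z - xp⟫ := by
    rw [← inner_sub_right]; congr 1; module
  have hfin : ak * (f z - f xp) ≥ ak * (⟪f' yk, z - xp⟫ - L/2 * Bn^2) := by
    apply mul_le_mul_of_nonneg_left _ hak.le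
    rw [hBn]
    linarith [hf1, hf2, hfdiff]
  have hpar : 2 * ⟪xk - xp, z - xp⟫ = ‖xk - xp‖^2 + ‖z - xp‖^2 - ‖xk - z‖^2 := by
    have h := norm_sub_sq_real (xk - xp) (z - xp)
    have e : (xk - xp) - (z - xp) = xk - z := by module
    rw [e] at h
    linarith [h]
  have hrev : ‖z - xp‖ = ‖xp - z‖ := norm_sub_rev _ _
  have hfin2 : ak * ((f z + g z) - (f xp + g xp))
      ≥ ⟪xk - xp, z - xp⟫ - ak * (L/2) * Bn^2 := by nlinarith [hg1, hfin]
  rw [hnxp] at hpar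
  rw [hrev] at hpar
  nlinarith [hfin2, hpar, hE]

theorem eeg_sublinear_rate (n : ℕ) (L : ℝ) (hL : 0 < L)
    (f : EuclideanSpace ℝ (Fin n) → ℝ) (f' : EuclideanSpace ℝ (Fin n) → EuclideanSpace ℝ (Fin n))
    (hfconv : ConvexOn ℝ Set.univ f)
    (hf : ∀ x, HasGradientAt f (f' x) x)
    (hlip : ∀ x y, ‖f' x - f' y‖ ≤ L * ‖x - y‖)
    (g : EuclideanSpace ℝ (Fin n) → ℝ) (hg : ConvexOn ℝ Set.univ g)
    (s α : ℕ → ℝ) (smin αmin : ℝ)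
    (hsmin : 0 < smin) (hsmin' : ∀ k, smin ≤ s k) (hs : ∀ k, s k ≤ 1 / (2 * L))
    (hsα : ∀ k, s k ≤ α k) (hα : ∀ k, α k ≤ 1 / L - s k)
    (hαmin : 0 < αmin) (hαmin' : ∀ k, αmin ≤ α k)
    (x y : ℕ → EuclideanSpace ℝ (Fin n))
    (hy : ∀ k w, g (y k) + ‖y k - (x k - s k • f' (x k))‖ ^ 2 / (2 * s k)
        ≤ g w + ‖w - (x k - s k • f' (x k))‖ ^ 2 / (2 * s k))
    (hx : ∀ k w, g (x (k + 1)) + ‖x (k + 1) - (x k - α k • f' (y k))‖ ^ 2 / (2 * α k)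
        ≤ g w + ‖w - (x k - α k • f' (y k))‖ ^ 2 / (2 * α k))
    (xstar : EuclideanSpace ℝ (Fin n)) (hstar : ∀ w, f xstar + g xstar ≤ f w + g w) :
    ∀ m : ℕ, 1 ≤ m →
      (f (x m) + g (x m)) - (f xstar + g xstar) ≤ ‖x 0 - xstar‖ ^ 2 / (2 * m * αmin) := by
  intro m hm
  have hsk : ∀ k, 0 < s k := fun k => lt_of_lt_of_le hsmin (hsmin' k)
  have hak : ∀ k, 0 < α k := fun k => lt_of_lt_of_le (hsk k) (hsα k)
  have hsum : ∀ k, L * (α k + s k) ≤ 1 := by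
    intro k
    have h := hα k
    have h2 : α k + s k ≤ 1 / L := by linarith
    calc L * (α k + s k) ≤ L * (1 / L) := mul_le_mul_of_nonneg_left h2 hL.le
    _ = 1 := by field_simp
  have hones : ∀ k z, (‖x (k+1) - z‖ ^ 2 - ‖x k - z‖ ^ 2) / 2
      ≤ α k * ((f z + g z) - (f (x (k+1)) + g (x (k+1)))) := fun k z =>
    eeg_onestep L hL f f' hfconv hf hlip g hg (s k) (α k) (hsk k) (hsα k) (hsum k)
      (x k) (y k) (x (k+1)) (hy k) (hx k) z
  -- descent
  have hdesc : ∀ k, f (x (k+1)) + g (x (k+1)) ≤ f (x k) + g (x k) := by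
    intro k
    have h := hones k (x k)
    rw [sub_self, norm_zero] at h
    have h0 : 0 ≤ α k * ((f (x k) + g (x k)) - (f (x (k+1)) + g (x (k+1)))) := by
      nlinarith [h, sq_nonneg ‖x (k+1) - x k‖]
    nlinarith [h0, hak k]
  have hanti : Antitone (fun k => f (x k) + g (x k)) :=
    antitone_nat_of_succ_le hdesc
  have hlow : ∀ k, f xstar + g xstar ≤ f (x k) + g (x k) := fun k => hstar (x k)
  set D : ℝ := (f (x m) + g (x m)) - (f xstar + g xstar) with hD
  have hD0 : 0 ≤ D := by rw [hD]; linarith [hlow m]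
  -- per-step bound
  have hstep : ∀ k ∈ Finset.range m, αmin * D
      ≤ (‖x k - xstar‖ ^ 2 - ‖x (k+1) - xstar‖ ^ 2) / 2 := by
    intro k hk
    rw [Finset.mem_range] at hk
    have hk1 : k + 1 ≤ m := hk
    have hmono : f (x m) + g (x m) ≤ f (x (k+1)) + g (x (k+1)) := hanti hk1
    have hD1 : αmin * D ≤ α k * ((f (x (k+1)) + g (x (k+1))) - (f xstar + g xstar)) := by
      have hDk : 0 ≤ (f (x (k+1)) + g (x (k+1))) - (f xstar + g xstar) := by
        linarith [hlow (k+1)]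
      have h1 : αmin * D ≤ α k * D := mul_le_mul_of_nonneg_right (hαmin' k) hD0
      have h2 : α k * D ≤ α k * ((f (x (k+1)) + g (x (k+1))) - (f xstar + g xstar)) := by
        apply mul_le_mul_of_nonneg_left _ (hak k).le
        rw [hD]; linarith
      linarith
    have h3 := hones k xstar
    nlinarith [hD1, h3]
  -- sum up
  have hsumle := Finset.sum_le_sum hstep
  rw [Finset.sum_const, Finset.card_range] at hsumle
  have htel : ∑ k ∈ Finset.range m, (‖x k - xstar‖ ^ 2 - ‖x (k+1) - xstar‖ ^ 2) / 2
      = (‖x 0 - xstar‖ ^ 2 - ‖x m - xstar‖ ^ 2) / 2 := by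
    rw [← Finset.sum_div]
    congr 1
    exact Finset.sum_range_sub' (fun k => ‖x k - xstar‖ ^ 2) m
  rw [htel] at hsumle
  have hfinal : (m : ℝ) * (αmin * D) ≤ ‖x 0 - xstar‖ ^ 2 / 2 := by
    have := hsumle
    rw [nsmul_eq_mul] at this
    nlinarith [this, sq_nonneg ‖x m - xstar‖]
  have hmpos : (1:ℝ) ≤ (m:ℝ) := by exact_mod_cast hm
  have hden : 0 < 2 * (m:ℝ) * αmin := by positivity
  rw [le_div_iff₀ hden]
  nlinarith [hfinal]
end

section
/- Let f be convex, differentiable with L-Lipschitz gradient, g : ℝ^n → ℝ convex, F = f + g, and 0 < s ≤ α with Ls < 1. With y = prox_{sg}(x - s∇f(x)) and x⁺ = prox_{αg}(x - α∇f(y)), one has F(x) - F(x⁺) ≥ (1/α - (L/2)(1/(1 - Ls) - s/α)²)‖x - x⁺‖². -/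
set_option maxHeartbeats 1000000

open scoped RealInnerProductSpace
open Set

variable {n : ℕ}
local notation "X" => EuclideanSpace ℝ (Fin n)

/-- Gradient inequality for a convex differentiable function. -/
lemma grad_ineq (f : X → ℝ) (f' : X → X) (hconv : ConvexOn ℝ Set.univ f)
    (hf : ∀ x, HasGradientAt f (f' x) x) (a b : X) :
    f a + ⟪f' a, b - a⟫ ≤ f b := by
  set c : ℝ → X := fun t => a + t • (b - a) with hc
  have hline : ∀ t : ℝ, HasDerivAt c (b - a) t := by
    intro t
    have h1 : HasDerivAt (fun t : ℝ => t • (b - a)) ((1:ℝ) • (b - a)) t :=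
      (hasDerivAt_id t).smul_const (b - a)
    rw [one_smul] at h1
    exact h1.const_add a
  have hφ : HasDerivAt (fun t => f (c t)) ⟪f' a, b - a⟫ 0 := by
    have h2 := ((hf (c 0)).hasFDerivAt.comp_hasDerivAt 0 (hline 0))
    have hc0 : c 0 = a := by simp [hc]
    simp only [hc0, InnerProductSpace.toDual_apply_apply] at h2
    exact h2
  have hslope : ∀ t ∈ Set.Ioc (0:ℝ) 1, (f (c t) - f (c 0)) / (t - 0) ≤ f b - f a := by
    intro t ht
    have hcomb : c t = (1 - t) • a + t • b := by
      simp [hc, smul_sub, sub_smul]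
      abel
    have := hconv.2 (Set.mem_univ a) (Set.mem_univ b) (by linarith [ht.2] : (0:ℝ) ≤ 1 - t)
      (le_of_lt ht.1) (by ring)
    rw [← hcomb] at this
    have hc0 : c 0 = a := by simp [hc]
    simp only [smul_eq_mul] at this
    rw [hc0, sub_zero, div_le_iff₀ ht.1]
    nlinarith [this, ht.1]
  have htends : Filter.Tendsto (slope (fun t => f (c t)) 0) (nhdsWithin 0 (Set.Ioi 0))
      (nhds ⟪f' a, b - a⟫) := by
    have := hasDerivAt_iff_tendsto_slope.mp hφ
    exact this.mono_left (nhdsWithin_mono _ (fun t ht => ne_of_gt ht))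
  have : ⟪f' a, b - a⟫ ≤ f b - f a := by
    refine le_of_tendsto htends ?_
    filter_upwards [Ioc_mem_nhdsGT_of_mem (by norm_num : (0:ℝ) ∈ Set.Ico (0:ℝ) 1)] with t ht
    have := hslope t ht
    rwa [slope_def_field]
    
  linarith

lemma grad_sq (L : ℝ) (f : X → ℝ) (f' : X → X) (hf : ∀ x, HasGradientAt f (f' x) x) (z : X) :
    HasGradientAt (fun w : X => L/2 * ‖w‖^2 - f w) (L • z - f' z) z := by
  rw [hasGradientAt_iff_hasFDerivAt]
  have h1 : HasFDerivAt (fun w : X => ⟪w, w⟫)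
      ((fderivInnerCLM ℝ (z, z)).comp ((ContinuousLinearMap.id ℝ X).prod (ContinuousLinearMap.id ℝ X))) z :=
    (hasFDerivAt_id z).inner ℝ (hasFDerivAt_id z)
  have h2 : HasFDerivAt (fun w : X => L/2 * ‖w‖^2 - f w)
      ((L/2) • ((fderivInnerCLM ℝ (z, z)).comp ((ContinuousLinearMap.id ℝ X).prod (ContinuousLinearMap.id ℝ X)))
        - (InnerProductSpace.toDual ℝ X (f' z) : X →L[ℝ] ℝ)) z := by
    have h1' : HasFDerivAt (fun w : X => L/2 * ‖w‖^2)
        ((L/2) • ((fderivInnerCLM ℝ (z, z)).comp ((ContinuousLinearMap.id ℝ X).prod (ContinuousLinearMap.id ℝ X)))) z := by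
      have := h1.const_mul (L/2)
      apply this.congr_of_eventuallyEq
      filter_upwards with w
      rw [real_inner_self_eq_norm_sq]
    exact h1'.sub ((hf z).hasFDerivAt)
  apply h2.congr_fderiv
  ext v
  simp [fderivInnerCLM_apply, InnerProductSpace.toDual_apply_apply, inner_sub_left, real_inner_smul_left,
    real_inner_comm z v]
  ring

lemma descent_lemma (L : ℝ) (hL : 0 < L) (f : X → ℝ) (f' : X → X)
    (hconv : ConvexOn ℝ Set.univ f) (hf : ∀ x, HasGradientAt f (f' x) x)
    (hlip : ∀ x y, ‖f' x - f' y‖ ≤ L * ‖x - y‖) (a b : X) :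
    f b ≤ f a + ⟪f' a, b - a⟫ + L/2 * ‖b - a‖^2 := by
  set g1 : X → ℝ := fun w => L/2 * ‖w‖^2 - f w with hg1def
  set g1' : X → X := fun w => L • w - f' w with hg1'def
  have hg1 : ∀ z, HasGradientAt g1 (g1' z) z := fun z => grad_sq L f f' hf z
  have hmono : ∀ p q : X, 0 ≤ ⟪g1' p - g1' q, p - q⟫ := by
    intro p q
    have h1 : g1' p - g1' q = L • (p - q) - (f' p - f' q) := by
      simp [hg1'def, smul_sub]; abel
    rw [h1, inner_sub_left, real_inner_smul_left, real_inner_self_eq_norm_sq]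
    have h2 : ⟪f' p - f' q, p - q⟫ ≤ ‖f' p - f' q‖ * ‖p - q‖ := real_inner_le_norm _ _
    have h3 := hlip p q
    nlinarith [norm_nonneg (p - q), norm_nonneg (f' p - f' q)]
  have hconv1 : ConvexOn ℝ Set.univ g1 := by
    constructor
    · exact convex_univ
    intro p hp q hq μ ν hμ hν hμν
    set c : ℝ → X := fun t => p + t • (q - p) with hc
    have hline : ∀ t : ℝ, HasDerivAt c (q - p) t := by
      intro t
      have h1 : HasDerivAt (fun t : ℝ => t • (q - p)) ((1:ℝ) • (q - p)) t :=
        (hasDerivAt_id t).smul_const (q - p)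
      rw [one_smul] at h1
      exact h1.const_add p
    have hψ : ∀ t : ℝ, HasDerivAt (fun t => g1 (c t)) ⟪g1' (c t), q - p⟫ t := by
      intro t
      have h2 := ((hg1 (c t)).hasFDerivAt.comp_hasDerivAt t (hline t))
      simp only [InnerProductSpace.toDual_apply_apply] at h2
      exact h2
    have hderiv : deriv (fun t => g1 (c t)) = fun t => ⟪g1' (c t), q - p⟫ :=
      funext fun t => (hψ t).deriv
    have hcv : ConvexOn ℝ Set.univ (fun t => g1 (c t)) := by
      apply Monotone.convexOn_univ_of_deriv
      · exact fun t => (hψ t).differentiableAt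
      · rw [hderiv]
        intro t t' htt'
        rcases eq_or_lt_of_le htt' with h | h
        · exact le_of_eq (by rw [h])
        · show ⟪g1' (c t), q - p⟫ ≤ ⟪g1' (c t'), q - p⟫
          have hm := hmono (c t') (c t)
          have hdiff : c t' - c t = (t' - t) • (q - p) := by
            simp only [hc]; module
          rw [hdiff, real_inner_smul_right, inner_sub_left] at hm
          nlinarith [hm]
    have hcomb : μ • p + ν • q = c ν := by
      have hμ1 : μ = 1 - ν := by linarith
      simp only [hc, hμ1, smul_sub, sub_smul, one_smul]
      abel
    have hthis := hcv.2 (Set.mem_univ (0:ℝ)) (Set.mem_univ (1:ℝ)) hμ hν hμν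
    simp only [smul_eq_mul, mul_zero, mul_one, zero_add] at hthis
    rw [hcomb]
    calc g1 (c ν) ≤ μ * g1 (c 0) + ν * g1 (c 1) := hthis
    _ = μ • g1 p + ν • g1 q := by rw [show c 0 = p by simp [hc], show c 1 = q by simp [hc]]; simp [smul_eq_mul]
  have key := grad_ineq g1 g1' hconv1 hg1 a b
  simp only [hg1def, hg1'def] at key
  rw [inner_sub_left, real_inner_smul_left] at key
  have hexp : ‖b - a‖^2 = ‖b‖^2 - 2*⟪a,b⟫ + ‖a‖^2 := by
    rw [norm_sub_sq_real]; ring_nf; rw [real_inner_comm]; ring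
  have hab : ⟪a, b - a⟫ = ⟪a,b⟫ - ‖a‖^2 := by
    rw [inner_sub_right, real_inner_self_eq_norm_sq]
  rw [hab] at key
  rw [hexp]
  nlinarith [key]

/-- First-order optimality condition for the prox subproblem. -/
lemma prox_subgrad (g : X → ℝ) (hg : ConvexOn ℝ Set.univ g) (c : ℝ) (hc : 0 < c)
    (z v : X) (hmin : ∀ w, g z + ‖z - v‖ ^ 2 / (2 * c) ≤ g w + ‖w - v‖ ^ 2 / (2 * c)) :
    ∀ w, g z + ⟪v - z, w - z⟫ / c ≤ g w := by
  intro w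
  by_contra hcon
  push_neg at hcon
  set B : ℝ := g w - g z + ⟪z - v, w - z⟫ / c with hB
  set C : ℝ := ‖w - z‖ ^ 2 / (2 * c) with hC
  have hC0 : 0 ≤ C := by positivity
  have hBneg : B < 0 := by
    have h0 : ⟪z - v, w - z⟫ = -⟪v - z, w - z⟫ := by
      rw [← inner_neg_left]; congr 1; abel
    rw [hB, h0, neg_div]
    linarith
  have hkey : ∀ t : ℝ, 0 < t → t ≤ 1 → 0 ≤ B + t * C := by
    intro t ht0 ht1
    have h1 := hmin (z + t • (w - z))
    have hcomb : z + t • (w - z) = (1 - t) • z + t • w := by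
      rw [sub_smul, one_smul, smul_sub]; abel
    have hconv : g (z + t • (w - z)) ≤ (1 - t) * g z + t * g w := by
      rw [hcomb]
      have := hg.2 (Set.mem_univ z) (Set.mem_univ w)
        (show (0:ℝ) ≤ 1 - t by linarith) (show (0:ℝ) ≤ t from ht0.le) (by ring)
      simpa [smul_eq_mul] using this
    have hnorm : ‖z + t • (w - z) - v‖ ^ 2
        = ‖z - v‖ ^ 2 + 2 * t * ⟪z - v, w - z⟫ + t ^ 2 * ‖w - z‖ ^ 2 := by
      have h2 : z + t • (w - z) - v = (z - v) + t • (w - z) := by abel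
      rw [h2, norm_add_sq_real, real_inner_smul_right, norm_smul]
      simp [mul_pow, abs_of_nonneg (le_of_lt ht0)]
      ring
    rw [hnorm] at h1
    have hsplit : (‖z - v‖ ^ 2 + 2 * t * ⟪z - v, w - z⟫ + t ^ 2 * ‖w - z‖ ^ 2) / (2 * c)
        = ‖z - v‖ ^ 2 / (2 * c) + (2 * t * ⟪z - v, w - z⟫ + t ^ 2 * ‖w - z‖ ^ 2) / (2 * c) := by
      ring
    rw [hsplit] at h1
    have h3 : 0 ≤ t * (g w - g z) + (2 * t * ⟪z - v, w - z⟫ + t ^ 2 * ‖w - z‖ ^ 2) / (2 * c) := by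
      linarith [h1, hconv]
    have h5 : t * (B + t * C)
        = t * (g w - g z) + (2 * t * ⟪z - v, w - z⟫ + t ^ 2 * ‖w - z‖ ^ 2) / (2 * c) := by
      rw [hB, hC]
      field_simp
      ring
    have h6 : 0 ≤ t * (B + t * C) := by rw [h5]; exact h3
    nlinarith [h6, ht0]
  have hCpos : (0:ℝ) < 2 * C + 1 := by linarith
  have htpos : 0 < min 1 (-B / (2 * C + 1)) :=
    lt_min one_pos (div_pos (neg_pos.mpr hBneg) hCpos)
  have ht := hkey (min 1 (-B / (2 * C + 1))) htpos (min_le_left _ _)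
  have hmin2 : min 1 (-B / (2 * C + 1)) ≤ -B / (2 * C + 1) := min_le_right _ _
  have hlt : (-B / (2 * C + 1)) * C < -B := by
    rw [div_mul_eq_mul_div, div_lt_iff₀ hCpos]
    nlinarith [hBneg, hC0]
  have := mul_le_mul_of_nonneg_right hmin2 hC0
  linarith [ht, this, hlt]

/-- Scalar core: bound `U = ‖y - x⁺‖` by `‖x - x⁺‖`. -/
lemma scalar_core (L s α E D U P T : ℝ) (hL : 0 < L) (hs : 0 < s) (hsα : s ≤ α)
    (hsL : L * s < 1) (hE0 : 0 ≤ E) (hD0 : 0 ≤ D) (hU0 : 0 ≤ U)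
    (hU2 : U ^ 2 = D ^ 2 - 2 * P + E ^ 2) (htri : E - D ≤ U)
    (hA : 0 ≤ α * (P - E ^ 2) - s * (D ^ 2 - P) + s * α * T) (hT : T ≤ L * E * U)
    (hCS : D ^ 2 - P ≤ D * U) :
    U ≤ (1 / (1 - L * s) - s / α) * D := by
  have hα : 0 < α := lt_of_lt_of_le hs hsα
  have h1m : 0 < 1 - L * s := by nlinarith
  have hsαpos : 0 < s * α := mul_pos hs hα
  -- (★)
  have hstar : (α + s) * U ^ 2 - 2 * s * α * L * (E * U) + (α - s) * (E ^ 2 - D ^ 2) ≤ 0 := by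
    nlinarith [hA, mul_le_mul_of_nonneg_left hT (le_of_lt hsαpos), hU2]
  -- Step I : E * (1 - L * s) ≤ D
  have hE : E * (1 - L * s) ≤ D := by
    by_contra hcon
    push_neg at hcon
    have hED : L * s * E < E - D := by nlinarith
    have hEDpos : 0 < E - D := by nlinarith [mul_nonneg (mul_nonneg hL.le hs.le) hE0]
    have hUpos : 0 < U := lt_of_lt_of_le hEDpos htri
    have hfact2 : 0 ≤ (α + s) * (U + (E - D)) - 2 * s * α * L * E := by
      nlinarith [htri, hED, mul_nonneg hL.le hE0]
    have hprod : 0 ≤ (U - (E - D)) * ((α + s) * (U + (E - D)) - 2 * s * α * L * E) :=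
      mul_nonneg (by linarith) hfact2
    have hlast : 0 < (E - D) * (α * E * (1 - L * s) - s * D) := by
      apply mul_pos hEDpos
      nlinarith
    nlinarith [hstar, hprod, hlast]
  -- Step II
  have hAu : α * U ^ 2 ≤ (α - s) * (D * U) + s * α * (L * E * U) := by
    have hαs : 0 ≤ α - s := by linarith
    nlinarith [hA, mul_le_mul_of_nonneg_left hT (le_of_lt hsαpos), hU2,
      mul_le_mul_of_nonneg_left hCS hαs]
  have hcc : (1 / (1 - L * s) - s / α) = (α - s * (1 - L * s)) / (α * (1 - L * s)) := by
    field_simp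
  rw [hcc]
  have key : α * (1 - L * s) * U ≤ (α - s * (1 - L * s)) * D := by
    rcases eq_or_lt_of_le hU0 with h | h
    · rw [← h]
      have h9 : 0 ≤ (α - s * (1 - L * s)) := by nlinarith
      nlinarith [mul_nonneg h9 hD0]
    · have h2a := mul_le_mul_of_nonneg_left hAu h1m.le
      have h2b := mul_le_mul_of_nonneg_right hE
          (mul_nonneg (mul_nonneg hs.le (mul_nonneg hL.le hα.le)) hU0)
      have h2 : α * (1 - L * s) * U ^ 2 ≤ (α - s * (1 - L * s)) * (D * U) := by
        nlinarith [h2a, h2b]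
      have h3 : (α * (1 - L * s) * U) * U ≤ ((α - s * (1 - L * s)) * D) * U := by
        nlinarith [h2]
      exact le_of_mul_le_mul_right h3 h
  rw [div_mul_eq_mul_div, le_div_iff₀ (by positivity : (0:ℝ) < α * (1 - L * s))]
  nlinarith [key]

theorem convex_descent_condition (n : ℕ) (L : ℝ) (hL : 0 < L)
    (f : EuclideanSpace ℝ (Fin n) → ℝ) (f' : EuclideanSpace ℝ (Fin n) → EuclideanSpace ℝ (Fin n))
    (hfconv : ConvexOn ℝ Set.univ f)
    (hf : ∀ x, HasGradientAt f (f' x) x)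
    (hlip : ∀ x y, ‖f' x - f' y‖ ≤ L * ‖x - y‖)
    (g : EuclideanSpace ℝ (Fin n) → ℝ) (hg : ConvexOn ℝ Set.univ g)
    (s α : ℝ) (hs : 0 < s) (hsα : s ≤ α) (hsL : L * s < 1)
    (x y xp : EuclideanSpace ℝ (Fin n))
    (hy : ∀ w, g y + ‖y - (x - s • f' x)‖ ^ 2 / (2 * s) ≤ g w + ‖w - (x - s • f' x)‖ ^ 2 / (2 * s))
    (hxp : ∀ w, g xp + ‖xp - (x - α • f' y)‖ ^ 2 / (2 * α) ≤ g w + ‖w - (x - α • f' y)‖ ^ 2 / (2 * α)) :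
    (f x + g x) - (f xp + g xp)
      ≥ (1 / α - (L / 2) * (1 / (1 - L * s) - s / α) ^ 2) * ‖x - xp‖ ^ 2 := by
  have hα : 0 < α := lt_of_lt_of_le hs hsα
  have h1m : 0 < 1 - L * s := by nlinarith
  -- subgradient conditions
  have Hy := prox_subgrad g hg s hs y (x - s • f' x) hy
  have Hxp := prox_subgrad g hg α hα xp (x - α • f' y) hxp
  -- vectors
  have hude : y - xp = (x - xp) - (x - y) := by abel
  -- inner product computations
  have hI1 : (⟪(x - s • f' x) - y, xp - y⟫ : ℝ)
      = -⟪x - y, y - xp⟫ + s * ⟪f' x, y - xp⟫ := by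
    have h1 : (x - s • f' x) - y = (x - y) - s • f' x := by abel
    have h2 : xp - y = -(y - xp) := by abel
    rw [h1, h2, inner_neg_right, inner_sub_left, real_inner_smul_left]
    ring
  have hI2 : (⟪(x - α • f' y) - xp, y - xp⟫ : ℝ)
      = ⟪x - xp, y - xp⟫ - α * ⟪f' y, y - xp⟫ := by
    have h1 : (x - α • f' y) - xp = (x - xp) - α • f' y := by abel
    rw [h1, inner_sub_left, real_inner_smul_left]
  -- scalar abbreviations
  set E := ‖x - y‖ with hE
  set D := ‖x - xp‖ with hD
  set U := ‖y - xp‖ with hU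
  set P := (⟪x - y, x - xp⟫ : ℝ) with hP
  set T := (⟪f' y - f' x, y - xp⟫ : ℝ) with hT
  have heu : (⟪x - y, y - xp⟫ : ℝ) = P - E ^ 2 := by
    rw [hude, inner_sub_right, real_inner_self_eq_norm_sq, hP, hE]
  have hdu : (⟪x - xp, y - xp⟫ : ℝ) = D ^ 2 - P := by
    rw [hude, inner_sub_right, real_inner_self_eq_norm_sq, hP, hD,
      real_inner_comm (x - xp) (x - y)]
  -- monotonicity inequality (A)
  have hA : 0 ≤ α * (P - E ^ 2) - s * (D ^ 2 - P) + s * α * T := by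
    have h1 := Hy xp
    have h2 := Hxp y
    rw [hI1] at h1
    rw [hI2] at h2
    have h3 : (-⟪x - y, y - xp⟫ + s * ⟪f' x, y - xp⟫) / s
        + (⟪x - xp, y - xp⟫ - α * ⟪f' y, y - xp⟫) / α ≤ 0 := by linarith
    have h5 : ∀ a1 a2 a3 a4 : ℝ, α * a1 - s * a3 + s * α * (a4 - a2)
        = -((s * α) * ((-a1 + s * a2) / s + (a3 - α * a4) / α)) := by
      intro a1 a2 a3 a4
      field_simp
      ring
    have hTsplit : T = ⟪f' y, y - xp⟫ - ⟪f' x, y - xp⟫ := by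
      rw [hT, inner_sub_left]
    have h4 : 0 ≤ α * ⟪x - y, y - xp⟫ - s * ⟪x - xp, y - xp⟫ + s * α * T := by
      rw [hTsplit, h5 (⟪x - y, y - xp⟫ : ℝ) (⟪f' x, y - xp⟫ : ℝ) (⟪x - xp, y - xp⟫ : ℝ)
        (⟪f' y, y - xp⟫ : ℝ)]
      have := mul_nonpos_of_nonneg_of_nonpos (le_of_lt (mul_pos hs hα)) h3
      linarith
    rw [heu, hdu] at h4
    exact h4
  -- geometry facts
  have hU2 : U ^ 2 = D ^ 2 - 2 * P + E ^ 2 := by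
    have h0 : (⟪x - xp, x - y⟫ : ℝ) = P := by rw [hP]; exact real_inner_comm _ _
    rw [hU, hude, norm_sub_sq_real, h0, hD, hE]
  have htri : E - D ≤ U := by
    rw [hE, hD, hU, hude]
    calc ‖x - y‖ - ‖x - xp‖ ≤ ‖(x - y) - (x - xp)‖ := norm_sub_norm_le _ _
    _ = ‖(x - xp) - (x - y)‖ := norm_sub_rev _ _
  have hTle : T ≤ L * E * U := by
    rw [hT]
    calc (⟪f' y - f' x, y - xp⟫ : ℝ) ≤ ‖f' y - f' x‖ * ‖y - xp‖ := real_inner_le_norm _ _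
    _ ≤ (L * ‖y - x‖) * ‖y - xp‖ := mul_le_mul_of_nonneg_right (hlip y x) (norm_nonneg _)
    _ = L * E * U := by rw [hE, hU, norm_sub_rev y x]
  have hCS : D ^ 2 - P ≤ D * U := by
    rw [← hdu, hD, hU]
    exact real_inner_le_norm _ _
  -- key norm bound
  have hUb : U ≤ (1 / (1 - L * s) - s / α) * D :=
    scalar_core L s α E D U P T hL hs hsα hsL (norm_nonneg _) (norm_nonneg _) (norm_nonneg _)
      hU2 htri hA hTle hCS
  -- function value inequalities
  have hgx : g xp + (D ^ 2 / α - ⟪f' y, x - xp⟫) ≤ g x := by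
    have h1 := Hxp x
    have h2 : (⟪(x - α • f' y) - xp, x - xp⟫ : ℝ) = D ^ 2 - α * ⟪f' y, x - xp⟫ := by
      have h3 : (x - α • f' y) - xp = (x - xp) - α • f' y := by abel
      rw [h3, inner_sub_left, real_inner_smul_left, real_inner_self_eq_norm_sq, hD]
    rw [h2] at h1
    have h4 : (D ^ 2 - α * ⟪f' y, x - xp⟫) / α = D ^ 2 / α - ⟪f' y, x - xp⟫ := by
      field_simp
    rw [h4] at h1
    exact h1
  have hdesc := descent_lemma L hL f f' hfconv hf hlip y xp
  have hgrad := grad_ineq f f' hfconv hf y x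
  have hxpy : xp - y = -(y - xp) := by abel
  rw [hxpy, inner_neg_right, norm_neg] at hdesc
  -- hdesc : f xp ≤ f y - ⟪f' y, y - xp⟫ + L / 2 * U ^ 2
  have hfyd : (⟪f' y, x - xp⟫ : ℝ) = ⟪f' y, x - y⟫ + ⟪f' y, y - xp⟫ := by
    rw [← inner_add_right]
    congr 1
    abel
  rw [hfyd] at hgx
  -- final arithmetic
  have hfinal : (f x + g x) - (f xp + g xp) ≥ D ^ 2 / α - L / 2 * U ^ 2 := by
    linarith [hdesc, hgrad, hgx]
  have hc0 : 0 ≤ 1 / (1 - L * s) - s / α := by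
    have h1 : s / α ≤ 1 := by rw [div_le_one hα]; exact hsα
    have h2 : 1 ≤ 1 / (1 - L * s) := by
      rw [le_div_iff₀ h1m]
      nlinarith
    linarith
  have hU2le : U ^ 2 ≤ ((1 / (1 - L * s) - s / α) * D) ^ 2 := by
    have h6 := mul_le_mul hUb hUb (norm_nonneg _) (by positivity)
    calc U ^ 2 = U * U := sq U
    _ ≤ ((1 / (1 - L * s) - s / α) * D) * ((1 / (1 - L * s) - s / α) * D) := h6
    _ = ((1 / (1 - L * s) - s / α) * D) ^ 2 := (sq _).symm
  calc (f x + g x) - (f xp + g xp) ≥ D ^ 2 / α - L / 2 * U ^ 2 := hfinal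
  _ ≥ D ^ 2 / α - L / 2 * ((1 / (1 - L * s) - s / α) * D) ^ 2 := by nlinarith [hU2le]
  _ = (1 / α - L / 2 * (1 / (1 - L * s) - s / α) ^ 2) * D ^ 2 := by ring
end
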